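/- For every even integer ℓ > 0 there is a constant C_ℓ > 0 such that for every squarefree n ∈ S with n > 1, every z ∈ [0,1]² and every s > 0: ∫_{B(s,z) ∩ [0,1]²} |s_n(x)|^ℓ dx ≤ C_ℓ · s² · max_{t=1,2} ( M_t(n,ℓ)/N^ℓ + (1/N^ℓ) Σ' 1/(s · |ξ_t¹ + ⋯ + ξ_t^ℓ|) ), where M_t(n,ℓ) = #{(ξ¹,…,ξ^ℓ) ∈ Λ_n^ℓ : ξ_t¹ + ⋯ + ξ_t^ℓ = 0} and Σ' runs over the ℓ-tuples (ξ¹,…,ξ^ℓ) ∈ Λ_n^ℓ with ξ_t¹ + ⋯ + ξ_t^ℓ ≠ 0. -/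

import Mathlib

open MeasureTheory Filter Real

noncomputable section

/-- The set of lattice points `ξ = (ξ₁, ξ₂) ∈ ℤ²` with `ξ₁² + ξ₂² = n`
(every such point has `|ξᵢ| ≤ n`, so this `Finset` captures all of them). -/
def Lambda (n : ℕ) : Finset (ℤ × ℤ) :=
  (Finset.Icc (-(n : ℤ)) n ×ˢ Finset.Icc (-(n : ℤ)) n).filter
    (fun ξ => ξ.1 ^ 2 + ξ.2 ^ 2 = (n : ℤ))

/-- `N = N(n)`, the number of lattice points on the circle of radius `√n`. -/
def Nlat (n : ℕ) : ℕ := (Lambda n).card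

/-- `S`, the set of (positive) integers representable as a sum of two squares. -/
def S2 : Set ℕ := {n | 1 ≤ n ∧ (Lambda n).Nonempty}

/-- `S'` has density one in `T`. -/
def DensityOne (S' T : Set ℕ) : Prop :=
  Tendsto (fun X : ℕ => ((S' ∩ Set.Iic X).ncard : ℝ) / ((T ∩ Set.Iic X).ncard : ℝ))
    atTop (nhds 1)

/-- The `t`-th coordinate of a lattice point. -/
def coord (t : Fin 2) (ξ : ℤ × ℤ) : ℤ := if t = 0 then ξ.1 else ξ.2

/-- `ν̂ₙ(4) = (1/(N n²)) Σ_{ξ∈Λₙ} (ξ₁⁴ − 6ξ₁²ξ₂² + ξ₂⁴)`. -/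
def nu4 (n : ℕ) : ℝ :=
  (∑ ξ ∈ Lambda n, ((ξ.1 : ℝ) ^ 4 - 6 * (ξ.1 : ℝ) ^ 2 * (ξ.2 : ℝ) ^ 2 + (ξ.2 : ℝ) ^ 4)) /
    ((Nlat n : ℝ) * (n : ℝ) ^ 2)

/-- The closed axis-parallel square in `ℝ²` of side `s` centered at `z`. -/
def Box2 (s : ℝ) (z : ℝ × ℝ) : Set (ℝ × ℝ) :=
  Set.Icc (z.1 - s / 2) (z.1 + s / 2) ×ˢ Set.Icc (z.2 - s / 2) (z.2 + s / 2)

/-- The unit square `[0,1]² ⊆ ℝ²`. -/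
def USq : Set (ℝ × ℝ) := Set.Icc (0 : ℝ) 1 ×ˢ Set.Icc (0 : ℝ) 1

/-- Squarefree sums of two squares greater than 1. -/
def Ssf : Set ℕ := {n | n ∈ S2 ∧ Squarefree n ∧ 1 < n}

/-- `sₙ(x) = (1/N) Σ_{ξ∈Λₙ} (cos(2πξ₁x₁) + cos(2πξ₂x₂) − cos(2πξ₁x₁)cos(2πξ₂x₂))`. -/
def sn (n : ℕ) (x : ℝ × ℝ) : ℝ :=
  (1 / (Nlat n : ℝ)) * ∑ ξ ∈ Lambda n,
    (Real.cos (2 * π * ξ.1 * x.1) + Real.cos (2 * π * ξ.2 * x.2) -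
      Real.cos (2 * π * ξ.1 * x.1) * Real.cos (2 * π * ξ.2 * x.2))


/-! ### Auxiliary machinery for `stmt11` -/

def eE (m : ℤ) (t : ℝ) : ℂ := Complex.exp ((2*π*(m:ℝ)*t : ℝ) * Complex.I)

theorem eE_neg (m : ℤ) (t : ℝ) :
    eE (-m) t = Complex.exp (-((2*π*(m:ℝ)*t : ℝ):ℂ) * Complex.I) := by
  unfold eE
  congr 1
  push_cast
  ring

theorem eE_norm (m : ℤ) (t : ℝ) : ‖eE m t‖ = 1 := by
  rw [eE, Complex.norm_exp_ofReal_mul_I]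

theorem eE_cont (m : ℤ) : Continuous (eE m) := by
  unfold eE; fun_prop

theorem st11_hcos (θ : ℝ) : ((Real.cos θ : ℝ):ℂ) =
    (Complex.exp ((θ:ℂ)*Complex.I) + Complex.exp (-(θ:ℂ)*Complex.I))/2 := by
  rw [Complex.ofReal_cos, eq_div_iff (two_ne_zero), mul_comm, Complex.two_cos]

theorem st11_mem_neg2 (n : ℕ) (ξ : ℤ × ℤ) : (ξ.1, -ξ.2) ∈ Lambda n ↔ ξ ∈ Lambda n := by
  simp only [Lambda, Finset.mem_filter, Finset.mem_product, Finset.mem_Icc, neg_sq]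
  constructor <;> rintro ⟨⟨h1, h2⟩, h3⟩ <;> exact ⟨⟨h1, by omega⟩, h3⟩

theorem st11_mem_neg1 (n : ℕ) (ξ : ℤ × ℤ) : (-ξ.1, ξ.2) ∈ Lambda n ↔ ξ ∈ Lambda n := by
  simp only [Lambda, Finset.mem_filter, Finset.mem_product, Finset.mem_Icc, neg_sq]
  constructor <;> rintro ⟨⟨h1, h2⟩, h3⟩ <;> exact ⟨⟨by omega, h2⟩, h3⟩

theorem st11_reidx2 (n : ℕ) (f : ℤ × ℤ → ℂ) :
    ∑ ξ ∈ Lambda n, f (ξ.1, -ξ.2) = ∑ ξ ∈ Lambda n, f ξ := by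
  apply Finset.sum_nbij' (i := fun ξ => ((ξ.1 : ℤ), -ξ.2)) (j := fun ξ => ((ξ.1 : ℤ), -ξ.2)) <;>
    intro a ha <;> simp [st11_mem_neg2 n a, ha]

theorem st11_reidx1 (n : ℕ) (f : ℤ × ℤ → ℂ) :
    ∑ ξ ∈ Lambda n, f (-ξ.1, ξ.2) = ∑ ξ ∈ Lambda n, f ξ := by
  apply Finset.sum_nbij' (i := fun ξ => (-(ξ.1 : ℤ), ξ.2)) (j := fun ξ => (-(ξ.1 : ℤ), ξ.2)) <;>
    intro a ha <;> simp [st11_mem_neg1 n a, ha]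

theorem st11_conv (n : ℕ) (u v : ℝ) :
    ((∑ ξ ∈ Lambda n, Real.cos (2*π*ξ.1*u) * Real.cos (2*π*ξ.2*v) : ℝ) : ℂ)
      = ∑ ξ ∈ Lambda n, eE ξ.1 u * eE ξ.2 v := by
  rw [Complex.ofReal_sum]
  have step : ∀ ξ : ℤ × ℤ,
      ((Real.cos (2*π*ξ.1*u) * Real.cos (2*π*ξ.2*v) : ℝ) : ℂ)
        = (eE ξ.1 u * eE ξ.2 v + eE ξ.1 u * eE (-ξ.2) v
            + eE (-ξ.1) u * eE ξ.2 v + eE (-ξ.1) u * eE (-ξ.2) v)/4 := by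
    intro ξ
    rw [Complex.ofReal_mul, st11_hcos (2*π*(ξ.1:ℝ)*u), st11_hcos (2*π*(ξ.2:ℝ)*v),
      eE_neg, eE_neg]
    unfold eE
    ring
  calc ∑ ξ ∈ Lambda n, ((Real.cos (2*π*ξ.1*u) * Real.cos (2*π*ξ.2*v) : ℝ) : ℂ)
      = ∑ ξ ∈ Lambda n, (eE ξ.1 u * eE ξ.2 v + eE ξ.1 u * eE (-ξ.2) v
            + eE (-ξ.1) u * eE ξ.2 v + eE (-ξ.1) u * eE (-ξ.2) v)/4 :=
        Finset.sum_congr rfl (fun ξ _ => step ξ)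
    _ = ((∑ ξ ∈ Lambda n, eE ξ.1 u * eE ξ.2 v) + (∑ ξ ∈ Lambda n, eE ξ.1 u * eE (-ξ.2) v)
          + (∑ ξ ∈ Lambda n, eE (-ξ.1) u * eE ξ.2 v)
          + (∑ ξ ∈ Lambda n, eE (-ξ.1) u * eE (-ξ.2) v))/4 := by
        rw [← Finset.sum_div, Finset.sum_add_distrib, Finset.sum_add_distrib,
          Finset.sum_add_distrib]
    _ = ∑ ξ ∈ Lambda n, eE ξ.1 u * eE ξ.2 v := by
        rw [st11_reidx2 n (fun ζ => eE ζ.1 u * eE ζ.2 v),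
          st11_reidx1 n (fun ζ => eE ζ.1 u * eE ζ.2 v),
          st11_reidx1 n (fun ζ => eE ζ.1 u * eE (-ζ.2) v),
          st11_reidx2 n (fun ζ => eE ζ.1 u * eE ζ.2 v)]
        ring

theorem st11_triv (f : ℝ → ℂ) (a b s : ℝ) (hab : a ≤ b) (hs : b - a ≤ s)
    (hf : ∀ x, ‖f x‖ = 1) : ‖∫ u in a..b, f u‖ ≤ s := by
  calc ‖∫ u in a..b, f u‖ ≤ 1 * |b - a| :=
        intervalIntegral.norm_integral_le_of_norm_le_const (fun x _ => le_of_eq (hf x))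
    _ = b - a := by rw [one_mul, abs_of_nonneg (by linarith)]
    _ ≤ s := hs

theorem st11_osc (m : ℤ) (a b s : ℝ) (hab : a ≤ b) (hs : b - a ≤ s) :
    ‖∫ u in a..b, eE m u‖ ≤ if m = 0 then s else 1/|(m:ℝ)| := by
  split_ifs with hm
  · exact st11_triv _ a b s hab hs (fun x => by rw [eE_norm])
  · have hc : ((2*π*(m:ℝ) : ℝ) : ℂ) * Complex.I ≠ 0 := by
      apply mul_ne_zero _ Complex.I_ne_zero
      simp only [ne_eq, Complex.ofReal_eq_zero]
      intro h
      rcases mul_eq_zero.mp h with h | h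
      · rcases mul_eq_zero.mp h with h | h
        · norm_num at h
        · exact pi_ne_zero h
      · exact hm (by exact_mod_cast h)
    have heq : ∀ u : ℝ, eE m u = Complex.exp ((((2*π*(m:ℝ) : ℝ) : ℂ) * Complex.I) * u) := by
      intro u
      rw [eE]
      congr 1
      push_cast
      ring
    rw [intervalIntegral.integral_congr
      (g := fun u => Complex.exp ((((2*π*(m:ℝ) : ℝ) : ℂ) * Complex.I) * u)) (fun u _ => heq u)]
    rw [integral_exp_mul_complex hc]
    have hnorm : ∀ r : ℝ, ‖Complex.exp ((((2*π*(m:ℝ) : ℝ) : ℂ) * Complex.I) * r)‖ = 1 := by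
      intro r
      rw [← heq r, eE_norm]
    have hcnorm : ‖(((2*π*(m:ℝ) : ℝ) : ℂ) * Complex.I)‖ = 2*π*|(m:ℝ)| := by
      rw [norm_mul, Complex.norm_real, Complex.norm_I, mul_one, Real.norm_eq_abs,
        abs_mul, abs_mul, abs_of_nonneg (by norm_num : (0:ℝ) ≤ 2), abs_of_nonneg pi_nonneg]
    have hm' : (1:ℝ) ≤ |(m:ℝ)| := by
      rw [← Int.cast_abs]
      exact_mod_cast Int.one_le_abs (by simpa using hm)
    calc ‖_ / (((2*π*(m:ℝ) : ℝ) : ℂ) * Complex.I)‖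
        = ‖Complex.exp ((((2*π*(m:ℝ):ℝ):ℂ) * Complex.I) * b)
            - Complex.exp ((((2*π*(m:ℝ):ℝ):ℂ) * Complex.I) * a)‖ / (2*π*|(m:ℝ)|) := by
          rw [norm_div, hcnorm]
      _ ≤ (‖Complex.exp ((((2*π*(m:ℝ):ℝ):ℂ) * Complex.I) * b)‖
            + ‖Complex.exp ((((2*π*(m:ℝ):ℝ):ℂ) * Complex.I) * a)‖) / (2*π*|(m:ℝ)|) := by
          gcongr
          exact norm_sub_le _ _
      _ = 2 / (2*π*|(m:ℝ)|) := by rw [hnorm, hnorm]; norm_num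
      _ ≤ 1/|(m:ℝ)| := by
          rw [div_le_div_iff₀ (by positivity) (by positivity)]
          nlinarith [pi_gt_three]

theorem st11_prod_int (f g : ℝ → ℂ) (hf : Continuous f) (hg : Continuous g)
    (a₁ b₁ a₂ b₂ : ℝ) (h₁ : a₁ ≤ b₁) (h₂ : a₂ ≤ b₂) :
    ∫ x in (Set.Icc a₁ b₁) ×ˢ (Set.Icc a₂ b₂), f x.1 * g x.2
      = (∫ u in a₁..b₁, f u) * (∫ v in a₂..b₂, g v) := by
  have hcont : Continuous (fun x : ℝ × ℝ => f x.1 * g x.2) := by fun_prop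
  have hint : IntegrableOn (fun x : ℝ × ℝ => f x.1 * g x.2)
      ((Set.Icc a₁ b₁) ×ˢ (Set.Icc a₂ b₂)) := by
    rw [Set.Icc_prod_Icc]
    exact hcont.integrableOn_Icc
  have hsp : ∫ x in (Set.Icc a₁ b₁) ×ˢ (Set.Icc a₂ b₂), f x.1 * g x.2
      = ∫ x in Set.Icc a₁ b₁, ∫ y in Set.Icc a₂ b₂, f x * g y :=
    MeasureTheory.setIntegral_prod _ hint
  rw [hsp]
  have inner : ∀ x : ℝ, ∫ y in Set.Icc a₂ b₂, f x * g y = f x * ∫ y in Set.Icc a₂ b₂, g y :=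
    fun x => MeasureTheory.integral_const_mul _ _
  rw [MeasureTheory.integral_congr_ae (Filter.EventuallyEq.of_eq (funext inner))]
  rw [MeasureTheory.integral_mul_const]
  rw [MeasureTheory.integral_Icc_eq_integral_Ioc, MeasureTheory.integral_Icc_eq_integral_Ioc,
    intervalIntegral.integral_of_le h₁, intervalIntegral.integral_of_le h₂]

theorem st11_pow_sum (Λ : Finset (ℤ × ℤ)) (ℓ : ℕ) (g : ℤ × ℤ → ℂ) :
    (∑ ξ ∈ Λ, g ξ)^ℓ = ∑ p ∈ Fintype.piFinset (fun _ : Fin ℓ => Λ), ∏ i, g (p i) := by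
  rw [← Finset.prod_univ_sum]
  rw [Finset.prod_const, Finset.card_univ, Fintype.card_fin]

theorem st11_prod_eE (ℓ : ℕ) (m : Fin ℓ → ℤ) (u : ℝ) :
    ∏ i, eE (m i) u = eE (∑ i, m i) u := by
  unfold eE
  rw [← Complex.exp_sum]
  congr 1
  push_cast
  rw [Finset.mul_sum, Finset.sum_mul, Finset.sum_mul]

theorem st11_three_pow (ℓ : ℕ) (x y z : ℝ) (hx : 0 ≤ x) (hy : 0 ≤ y) (hz : 0 ≤ z) :
    (x+y+z)^ℓ ≤ 3^(ℓ-1) * (x^ℓ+y^ℓ+z^ℓ) := by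
  rcases Nat.eq_zero_or_pos ℓ with h|h
  · simp [h]
  have := Real.pow_arith_mean_le_arith_mean_pow (Finset.univ : Finset (Fin 3))
    (fun _ => (1:ℝ)/3) (![x,y,z]) (by intro i _; norm_num)
    (by norm_num [Fin.sum_univ_three]) (by intro i _; fin_cases i <;> simpa) ℓ
  simp only [Fin.sum_univ_three] at this
  simp only [Matrix.cons_val_zero, Matrix.cons_val_one, Matrix.head_cons, Matrix.cons_val_two,
    Matrix.tail_cons] at this
  have h3 : (1:ℝ)/3 * x + 1/3 * y + 1/3 * z = (x+y+z)/3 := by ring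
  rw [h3, div_pow, div_le_iff₀ (by positivity)] at this
  calc (x+y+z)^ℓ ≤ (1/3*x^ℓ + 1/3*y^ℓ + 1/3*z^ℓ) * 3^ℓ := this
    _ = 3^(ℓ-1+1) * (x^ℓ+y^ℓ+z^ℓ) / 3 := by rw [Nat.sub_add_cancel h]; ring
    _ = 3^(ℓ-1) * (x^ℓ+y^ℓ+z^ℓ) := by rw [pow_succ]; ring

theorem st11_core (n ℓ : ℕ) (s A₁ B₁ A₂ B₂ : ℝ)
    (h₁ : A₁ ≤ B₁) (h₂ : A₂ ≤ B₂) (hs₁ : B₁ - A₁ ≤ s) (hs₂ : B₂ - A₂ ≤ s)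
    (α β : ℝ → ℝ) (hα : α = (fun t => t) ∨ α = (fun _ => 0))
    (hβ : β = (fun t => t) ∨ β = (fun _ => 0)) (t : Bool)
    (ht : if t then α = (fun t => t) else β = (fun t => t)) :
    ∫ x in (Set.Icc A₁ B₁) ×ˢ (Set.Icc A₂ B₂),
        ((1/(Nlat n:ℝ)) * ∑ ξ ∈ Lambda n,
          Real.cos (2*π*ξ.1*(α x.1)) * Real.cos (2*π*ξ.2*(β x.2)))^ℓ
      ≤ (1/(Nlat n:ℝ)^ℓ) * ∑ p ∈ Fintype.piFinset (fun _ : Fin ℓ => Lambda n),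
          (if t then (if (∑ i, (p i).1) = 0 then s else 1/|((∑ i, (p i).1 : ℤ):ℝ)|)
           else (if (∑ i, (p i).2) = 0 then s else 1/|((∑ i, (p i).2 : ℤ):ℝ)|)) * s := by
  have hαc : Continuous α := by rcases hα with rfl | rfl; exacts [continuous_id, continuous_const]
  have hβc : Continuous β := by rcases hβ with rfl | rfl; exacts [continuous_id, continuous_const]
  set N := (Nlat n : ℝ) with hN
  set P := Fintype.piFinset (fun _ : Fin ℓ => Lambda n) with hP
  set R := (Set.Icc A₁ B₁) ×ˢ (Set.Icc A₂ B₂) with hR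
  set realf : ℝ × ℝ → ℝ := fun x => ((1/N) * ∑ ξ ∈ Lambda n,
    Real.cos (2*π*ξ.1*(α x.1)) * Real.cos (2*π*ξ.2*(β x.2)))^ℓ with hrealf
  have h1 : ∀ x : ℝ × ℝ, ((realf x : ℝ) : ℂ)
      = (1/(N:ℂ))^ℓ * ∑ p ∈ P, eE (∑ i, (p i).1) (α x.1) * eE (∑ i, (p i).2) (β x.2) := by
    intro x
    rw [hrealf]
    rw [Complex.ofReal_pow, Complex.ofReal_mul, st11_conv n (α x.1) (β x.2), mul_pow,
      st11_pow_sum]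
    congr 1
    · push_cast; ring
    apply Finset.sum_congr rfl
    intro p _
    rw [Finset.prod_mul_distrib, st11_prod_eE, st11_prod_eE]
  have hintp : ∀ p : Fin ℓ → ℤ × ℤ, IntegrableOn
      (fun x : ℝ × ℝ => eE (∑ i, (p i).1) (α x.1) * eE (∑ i, (p i).2) (β x.2)) R := by
    intro p
    rw [hR, Set.Icc_prod_Icc]
    exact (((eE_cont _).comp (hαc.comp continuous_fst)).mul
      ((eE_cont _).comp (hβc.comp continuous_snd))).integrableOn_Icc
  have hbound : ∀ p : Fin ℓ → ℤ × ℤ,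
      ‖∫ x in R, eE (∑ i, (p i).1) (α x.1) * eE (∑ i, (p i).2) (β x.2)‖
        ≤ (if t then (if (∑ i, (p i).1) = 0 then s else 1/|((∑ i, (p i).1 : ℤ):ℝ)|)
           else (if (∑ i, (p i).2) = 0 then s else 1/|((∑ i, (p i).2 : ℤ):ℝ)|)) * s := by
    intro p
    have hs0 : (0:ℝ) ≤ s := le_trans (by linarith) hs₁
    rw [hR, st11_prod_int (fun u => eE (∑ i, (p i).1) (α u)) (fun v => eE (∑ i, (p i).2) (β v))
      ((eE_cont _).comp hαc) ((eE_cont _).comp hβc) _ _ _ _ h₁ h₂]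
    rw [norm_mul]
    cases t with
    | true =>
        simp only [if_true]
        rw [show α = (fun t => t) from ht]
        have b1 := st11_osc (∑ i, (p i).1) A₁ B₁ s h₁ hs₁
        have b2 := st11_triv (fun v => eE (∑ i, (p i).2) (β v)) A₂ B₂ s h₂ hs₂
          (fun v => eE_norm _ _)
        have hFnn : (0:ℝ) ≤ if (∑ i, (p i).1) = 0 then s else 1/|((∑ i, (p i).1 : ℤ):ℝ)| := by
          split_ifs with h
          · exact hs0
          · positivity
        exact mul_le_mul b1 b2 (norm_nonneg _) hFnn
    | false =>
        simp only [if_false, Bool.false_eq_true]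
        rw [show β = (fun t => t) from ht]
        have b1 := st11_triv (fun u => eE (∑ i, (p i).1) (α u)) A₁ B₁ s h₁ hs₁
          (fun u => eE_norm _ _)
        have b2 := st11_osc (∑ i, (p i).2) A₂ B₂ s h₂ hs₂
        rw [mul_comm]
        have hFnn : (0:ℝ) ≤ if (∑ i, (p i).2) = 0 then s else 1/|((∑ i, (p i).2 : ℤ):ℝ)| := by
          split_ifs with h
          · exact hs0
          · positivity
        exact mul_le_mul b2 b1 (norm_nonneg _) hFnn
  have hNnn : (0:ℝ) ≤ N := by rw [hN]; positivity
  show ∫ x in R, realf x ≤ _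
  calc ∫ x in R, realf x ≤ ‖((∫ x in R, realf x : ℝ) : ℂ)‖ := by
        rw [Complex.norm_real]; exact le_abs_self _
    _ = ‖∫ x in R, ((realf x : ℝ) : ℂ)‖ := by congr 1; exact integral_ofReal.symm
    _ = ‖(1/(N:ℂ))^ℓ * ∑ p ∈ P, ∫ x in R,
          eE (∑ i, (p i).1) (α x.1) * eE (∑ i, (p i).2) (β x.2)‖ := by
        rw [show (fun x : ℝ × ℝ => ((realf x : ℝ) : ℂ)) = fun x : ℝ × ℝ =>
          (1/(N:ℂ))^ℓ * ∑ p ∈ P, eE (∑ i, (p i).1) (α x.1) * eE (∑ i, (p i).2) (β x.2)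
          from funext h1]
        rw [MeasureTheory.integral_const_mul]
        rw [MeasureTheory.integral_finset_sum _ (fun p _ => hintp p)]
    _ ≤ (1/N^ℓ) * ∑ p ∈ P,
          (if t then (if (∑ i, (p i).1) = 0 then s else 1/|((∑ i, (p i).1 : ℤ):ℝ)|)
           else (if (∑ i, (p i).2) = 0 then s else 1/|((∑ i, (p i).2 : ℤ):ℝ)|)) * s := by
        rw [norm_mul]
        have hc : ‖(1/(N:ℂ))^ℓ‖ = 1/N^ℓ := by
          rw [norm_pow, norm_div, norm_one, Complex.norm_real, Real.norm_eq_abs,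
            abs_of_nonneg hNnn, div_pow, one_pow]
        rw [hc]
        exact mul_le_mul_of_nonneg_left
          ((norm_sum_le P _).trans (Finset.sum_le_sum (fun p _ => hbound p)))
          (by positivity)

/-- For every even `ℓ > 0` there is `C_ℓ > 0` such that for every squarefree
`n ∈ S` with `n > 1`, every `z ∈ [0,1]²` and every `s > 0`,
`∫_{B(s,z)∩[0,1]²} |sₙ(x)|^ℓ dx ≤ C_ℓ s² max_{t=1,2} (M_t(n,ℓ)/N^ℓ +
(1/N^ℓ) Σ'_{Σξ_t ≠ 0} 1/(s|ξ_t¹+⋯+ξ_t^ℓ|))`. -/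
theorem stmt11 {ℓ : ℕ} (hℓ : 0 < ℓ) (hev : Even ℓ) :
    ∃ C > 0, ∀ n ∈ S2, Squarefree n → 1 < n →
      ∀ z ∈ USq, ∀ s : ℝ, 0 < s →
        (∫ x in Box2 s z ∩ USq, |sn n x| ^ ℓ) ≤
          C * s ^ 2 * max
            ((Set.ncard {ξ : Fin ℓ → ℤ × ℤ | (∀ i, ξ i ∈ Lambda n) ∧
                ∑ i, coord 0 (ξ i) = 0} : ℝ) / (Nlat n : ℝ) ^ ℓ +
              (1 / (Nlat n : ℝ) ^ ℓ) *
                ∑ ξ ∈ (Fintype.piFinset fun _ : Fin ℓ => Lambda n).filter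
                    (fun ξ => ∑ i, coord 0 (ξ i) ≠ 0),
                  1 / (s * |((∑ i, coord 0 (ξ i) : ℤ) : ℝ)|))
            ((Set.ncard {ξ : Fin ℓ → ℤ × ℤ | (∀ i, ξ i ∈ Lambda n) ∧
                ∑ i, coord 1 (ξ i) = 0} : ℝ) / (Nlat n : ℝ) ^ ℓ +
              (1 / (Nlat n : ℝ) ^ ℓ) *
                ∑ ξ ∈ (Fintype.piFinset fun _ : Fin ℓ => Lambda n).filter
                    (fun ξ => ∑ i, coord 1 (ξ i) ≠ 0),
                  1 / (s * |((∑ i, coord 1 (ξ i) : ℤ) : ℝ)|)) := by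
  refine ⟨3^ℓ, by positivity, ?_⟩
  intro n hn _hsf _hn1 z _hz s hs
  have hcoord0 : (coord 0 : ℤ × ℤ → ℤ) = Prod.fst := by
    funext ξ; simp [coord]
  have hcoord1 : (coord 1 : ℤ × ℤ → ℤ) = Prod.snd := by
    funext ξ; rw [coord, if_neg (by decide)]
  simp only [hcoord0, hcoord1]
  set P := Fintype.piFinset (fun _ : Fin ℓ => Lambda n) with hP
  set T₁ := (Set.ncard {ξ : Fin ℓ → ℤ × ℤ | (∀ i, ξ i ∈ Lambda n) ∧
      ∑ i, (ξ i).1 = 0} : ℝ) / (Nlat n : ℝ) ^ ℓ +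
      (1 / (Nlat n : ℝ) ^ ℓ) * ∑ ξ ∈ P.filter (fun ξ => ∑ i, (ξ i).1 ≠ 0),
        1 / (s * |((∑ i, (ξ i).1 : ℤ) : ℝ)|) with hT₁
  set T₂ := (Set.ncard {ξ : Fin ℓ → ℤ × ℤ | (∀ i, ξ i ∈ Lambda n) ∧
      ∑ i, (ξ i).2 = 0} : ℝ) / (Nlat n : ℝ) ^ ℓ +
      (1 / (Nlat n : ℝ) ^ ℓ) * ∑ ξ ∈ P.filter (fun ξ => ∑ i, (ξ i).2 ≠ 0),
        1 / (s * |((∑ i, (ξ i).2 : ℤ) : ℝ)|) with hT₂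
  have hT₁nn : 0 ≤ T₁ := by rw [hT₁]; positivity
  have hT₂nn : 0 ≤ T₂ := by rw [hT₂]; positivity
  have hrhs : (0:ℝ) ≤ 3^ℓ * s^2 * max T₁ T₂ :=
    mul_nonneg (by positivity) (le_trans hT₁nn (le_max_left _ _))
  set A₁ := max (z.1 - s/2) 0 with hA₁
  set B₁ := min (z.1 + s/2) 1 with hB₁
  set A₂ := max (z.2 - s/2) 0 with hA₂
  set B₂ := min (z.2 + s/2) 1 with hB₂
  have hR : Box2 s z ∩ USq = Set.Icc A₁ B₁ ×ˢ Set.Icc A₂ B₂ := by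
    rw [Box2, USq, Set.prod_inter_prod, Set.Icc_inter_Icc, Set.Icc_inter_Icc]
  rcases le_or_gt A₁ B₁ with hab₁ | hab₁
  swap
  · rw [hR, Set.Icc_eq_empty (not_le.mpr hab₁), Set.empty_prod,
      MeasureTheory.setIntegral_empty]
    exact hrhs
  rcases le_or_gt A₂ B₂ with hab₂ | hab₂
  swap
  · rw [hR, Set.Icc_eq_empty (not_le.mpr hab₂), Set.prod_empty,
      MeasureTheory.setIntegral_empty]
    exact hrhs
  have hs₁ : B₁ - A₁ ≤ s := by
    have h1 : B₁ ≤ z.1 + s/2 := min_le_left _ _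
    have h2 : z.1 - s/2 ≤ A₁ := le_max_left _ _
    linarith
  have hs₂ : B₂ - A₂ ≤ s := by
    have h1 : B₂ ≤ z.2 + s/2 := min_le_left _ _
    have h2 : z.2 - s/2 ≤ A₂ := le_max_left _ _
    linarith
  -- the three pieces
  have hcore1 := st11_core n ℓ s A₁ B₁ A₂ B₂ hab₁ hab₂ hs₁ hs₂
    (fun t => t) (fun _ => (0:ℝ)) (Or.inl rfl) (Or.inr rfl) true (by simp)
  have hcore2 := st11_core n ℓ s A₁ B₁ A₂ B₂ hab₁ hab₂ hs₁ hs₂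
    (fun _ => (0:ℝ)) (fun t => t) (Or.inr rfl) (Or.inl rfl) false (by simp)
  have hcore3 := st11_core n ℓ s A₁ B₁ A₂ B₂ hab₁ hab₂ hs₁ hs₂
    (fun t => t) (fun t => t) (Or.inl rfl) (Or.inl rfl) true (by simp)
  simp only [if_true, if_false, Bool.false_eq_true, ← hP] at hcore1 hcore2 hcore3
  -- decomposition of sn
  have hdecomp : ∀ x : ℝ × ℝ, sn n x =
      ((1/(Nlat n:ℝ)) * ∑ ξ ∈ Lambda n, Real.cos (2*π*ξ.1*x.1) * Real.cos (2*π*ξ.2*(0:ℝ)))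
      + ((1/(Nlat n:ℝ)) * ∑ ξ ∈ Lambda n, Real.cos (2*π*ξ.1*(0:ℝ)) * Real.cos (2*π*ξ.2*x.2))
      - ((1/(Nlat n:ℝ)) * ∑ ξ ∈ Lambda n, Real.cos (2*π*ξ.1*x.1) * Real.cos (2*π*ξ.2*x.2)) := by
    intro x
    rw [sn]
    simp only [mul_zero, Real.cos_zero, mul_one, one_mul]
    rw [← mul_add, ← mul_sub, ← Finset.sum_add_distrib, ← Finset.sum_sub_distrib]
  have hpt : ∀ x : ℝ × ℝ, |sn n x|^ℓ ≤ 3^(ℓ-1) *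
      (((1/(Nlat n:ℝ)) * ∑ ξ ∈ Lambda n, Real.cos (2*π*ξ.1*x.1) * Real.cos (2*π*ξ.2*(0:ℝ)))^ℓ
      + ((1/(Nlat n:ℝ)) * ∑ ξ ∈ Lambda n, Real.cos (2*π*ξ.1*(0:ℝ)) * Real.cos (2*π*ξ.2*x.2))^ℓ
      + ((1/(Nlat n:ℝ)) * ∑ ξ ∈ Lambda n, Real.cos (2*π*ξ.1*x.1) * Real.cos (2*π*ξ.2*x.2))^ℓ) := by
    intro x
    set a := (1/(Nlat n:ℝ)) * ∑ ξ ∈ Lambda n, Real.cos (2*π*ξ.1*x.1) * Real.cos (2*π*ξ.2*(0:ℝ))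
    set b := (1/(Nlat n:ℝ)) * ∑ ξ ∈ Lambda n, Real.cos (2*π*ξ.1*(0:ℝ)) * Real.cos (2*π*ξ.2*x.2)
    set c := (1/(Nlat n:ℝ)) * ∑ ξ ∈ Lambda n, Real.cos (2*π*ξ.1*x.1) * Real.cos (2*π*ξ.2*x.2)
    calc |sn n x|^ℓ = |a + b - c|^ℓ := by rw [hdecomp x]
      _ ≤ (|a| + |b| + |c|)^ℓ := by
          apply pow_le_pow_left₀ (abs_nonneg _)
          calc |a + b - c| = |a + b + (-c)| := by rw [sub_eq_add_neg]
            _ ≤ |a| + |b| + |(-c)| := abs_add_three _ _ _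
            _ = |a| + |b| + |c| := by rw [abs_neg]
      _ ≤ 3^(ℓ-1) * (|a|^ℓ + |b|^ℓ + |c|^ℓ) :=
          st11_three_pow ℓ _ _ _ (abs_nonneg _) (abs_nonneg _) (abs_nonneg _)
      _ = 3^(ℓ-1) * (a^ℓ + b^ℓ + c^ℓ) := by rw [hev.pow_abs, hev.pow_abs, hev.pow_abs]
  -- continuity and integrability
  have hcont1 : Continuous (fun x : ℝ × ℝ =>
      ((1/(Nlat n:ℝ)) * ∑ ξ ∈ Lambda n,
        Real.cos (2*π*ξ.1*x.1) * Real.cos (2*π*ξ.2*(0:ℝ)))^ℓ) := by fun_prop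
  have hcont2 : Continuous (fun x : ℝ × ℝ =>
      ((1/(Nlat n:ℝ)) * ∑ ξ ∈ Lambda n,
        Real.cos (2*π*ξ.1*(0:ℝ)) * Real.cos (2*π*ξ.2*x.2))^ℓ) := by fun_prop
  have hcont3 : Continuous (fun x : ℝ × ℝ =>
      ((1/(Nlat n:ℝ)) * ∑ ξ ∈ Lambda n,
        Real.cos (2*π*ξ.1*x.1) * Real.cos (2*π*ξ.2*x.2))^ℓ) := by fun_prop
  have hcontsn : Continuous (fun x : ℝ × ℝ => |sn n x|^ℓ) := by
    unfold sn; fun_prop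
  have hIcc : (Set.Icc A₁ B₁ ×ˢ Set.Icc A₂ B₂) = Set.Icc (A₁, A₂) (B₁, B₂) :=
    Set.Icc_prod_Icc _ _ _ _
  have hint1 : IntegrableOn (fun x : ℝ × ℝ =>
      ((1/(Nlat n:ℝ)) * ∑ ξ ∈ Lambda n,
        Real.cos (2*π*ξ.1*x.1) * Real.cos (2*π*ξ.2*(0:ℝ)))^ℓ)
      (Set.Icc A₁ B₁ ×ˢ Set.Icc A₂ B₂) := by rw [hIcc]; exact hcont1.integrableOn_Icc
  have hint2 : IntegrableOn (fun x : ℝ × ℝ =>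
      ((1/(Nlat n:ℝ)) * ∑ ξ ∈ Lambda n,
        Real.cos (2*π*ξ.1*(0:ℝ)) * Real.cos (2*π*ξ.2*x.2))^ℓ)
      (Set.Icc A₁ B₁ ×ˢ Set.Icc A₂ B₂) := by rw [hIcc]; exact hcont2.integrableOn_Icc
  have hint3 : IntegrableOn (fun x : ℝ × ℝ =>
      ((1/(Nlat n:ℝ)) * ∑ ξ ∈ Lambda n,
        Real.cos (2*π*ξ.1*x.1) * Real.cos (2*π*ξ.2*x.2))^ℓ)
      (Set.Icc A₁ B₁ ×ˢ Set.Icc A₂ B₂) := by rw [hIcc]; exact hcont3.integrableOn_Icc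
  have hintsn : IntegrableOn (fun x : ℝ × ℝ => |sn n x|^ℓ)
      (Set.Icc A₁ B₁ ×ˢ Set.Icc A₂ B₂) := by rw [hIcc]; exact hcontsn.integrableOn_Icc
  have hmeas : MeasurableSet (Set.Icc A₁ B₁ ×ˢ Set.Icc A₂ B₂) :=
    measurableSet_Icc.prod measurableSet_Icc
  -- the U = s² T identities
  have hterm : ∀ a : ℝ, (1/|a|) * s = s^2 * (1/(s*|a|)) := by
    intro a
    rcases eq_or_ne a 0 with ha | ha
    · simp [ha]
    · field_simp
  have hUT : ∀ (σ : (Fin ℓ → ℤ × ℤ) → ℤ),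
      (1/(Nlat n:ℝ)^ℓ) * ∑ p ∈ P, (if σ p = 0 then s else 1/|((σ p : ℤ):ℝ)|) * s
        = s^2 * ((Set.ncard {ξ : Fin ℓ → ℤ × ℤ | (∀ i, ξ i ∈ Lambda n) ∧ σ ξ = 0} : ℝ)
            / (Nlat n : ℝ) ^ ℓ +
          (1 / (Nlat n : ℝ) ^ ℓ) * ∑ ξ ∈ P.filter (fun ξ => σ ξ ≠ 0),
            1 / (s * |((σ ξ : ℤ) : ℝ)|)) := by
    intro σ
    have hsplit : ∑ p ∈ P, (if σ p = 0 then s else 1/|((σ p : ℤ):ℝ)|) * s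
        = ∑ p ∈ P.filter (fun p => σ p = 0), (if σ p = 0 then s else 1/|((σ p : ℤ):ℝ)|) * s
          + ∑ p ∈ P.filter (fun p => ¬(σ p = 0)), (if σ p = 0 then s else 1/|((σ p : ℤ):ℝ)|) * s :=
      (Finset.sum_filter_add_sum_filter_not P _ _).symm
    have h1 : ∑ p ∈ P.filter (fun p => σ p = 0), (if σ p = 0 then s else 1/|((σ p : ℤ):ℝ)|) * s
        = ((P.filter (fun p => σ p = 0)).card : ℝ) * (s * s) := by
      rw [Finset.sum_congr rfl (fun p hp => by
        rw [if_pos (Finset.mem_filter.mp hp).2]), Finset.sum_const, nsmul_eq_mul]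
    have h2 : ∑ p ∈ P.filter (fun p => ¬(σ p = 0)), (if σ p = 0 then s else 1/|((σ p : ℤ):ℝ)|) * s
        = ∑ p ∈ P.filter (fun p => ¬(σ p = 0)), s^2 * (1/(s*|((σ p : ℤ):ℝ)|)) := by
      apply Finset.sum_congr rfl
      intro p hp
      rw [if_neg (Finset.mem_filter.mp hp).2, hterm]
    have hncard : (Set.ncard {ξ : Fin ℓ → ℤ × ℤ | (∀ i, ξ i ∈ Lambda n) ∧ σ ξ = 0} : ℝ)
        = ((P.filter (fun p => σ p = 0)).card : ℝ) := by
      congr 1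
      rw [show {ξ : Fin ℓ → ℤ × ℤ | (∀ i, ξ i ∈ Lambda n) ∧ σ ξ = 0}
          = ↑(P.filter (fun p => σ p = 0)) from by
        ext q
        simp [hP, Fintype.mem_piFinset]]
      exact Set.ncard_coe_finset _
    rw [hsplit, h1, h2, hncard, ← Finset.mul_sum, mul_add]
    rw [show ∀ X Y : ℝ, s^2 * (X / (Nlat n : ℝ)^ℓ + 1/(Nlat n : ℝ)^ℓ * Y)
        = 1/(Nlat n : ℝ)^ℓ * (s^2 * X) + 1/(Nlat n : ℝ)^ℓ * (s^2 * Y) from fun X Y => by ring,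
      Finset.mul_sum]
    ring
  have hU1 := hUT (fun p => ∑ i, (p i).1)
  have hU2 := hUT (fun p => ∑ i, (p i).2)
  beta_reduce at hU1 hU2
  -- assemble
  rw [hR]
  calc ∫ x in Set.Icc A₁ B₁ ×ˢ Set.Icc A₂ B₂, |sn n x|^ℓ
      ≤ ∫ x in Set.Icc A₁ B₁ ×ˢ Set.Icc A₂ B₂, 3^(ℓ-1) *
        (((1/(Nlat n:ℝ)) * ∑ ξ ∈ Lambda n, Real.cos (2*π*ξ.1*x.1) * Real.cos (2*π*ξ.2*(0:ℝ)))^ℓ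
        + ((1/(Nlat n:ℝ)) * ∑ ξ ∈ Lambda n, Real.cos (2*π*ξ.1*(0:ℝ)) * Real.cos (2*π*ξ.2*x.2))^ℓ
        + ((1/(Nlat n:ℝ)) * ∑ ξ ∈ Lambda n, Real.cos (2*π*ξ.1*x.1) * Real.cos (2*π*ξ.2*x.2))^ℓ) := by
        apply MeasureTheory.setIntegral_mono_on hintsn _ hmeas (fun x _ => hpt x)
        exact (((hint1.add hint2).add hint3).const_mul _)
    _ = 3^(ℓ-1) *
        ((∫ x in Set.Icc A₁ B₁ ×ˢ Set.Icc A₂ B₂,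
          ((1/(Nlat n:ℝ)) * ∑ ξ ∈ Lambda n, Real.cos (2*π*ξ.1*x.1) * Real.cos (2*π*ξ.2*(0:ℝ)))^ℓ)
        + (∫ x in Set.Icc A₁ B₁ ×ˢ Set.Icc A₂ B₂,
          ((1/(Nlat n:ℝ)) * ∑ ξ ∈ Lambda n, Real.cos (2*π*ξ.1*(0:ℝ)) * Real.cos (2*π*ξ.2*x.2))^ℓ)
        + (∫ x in Set.Icc A₁ B₁ ×ˢ Set.Icc A₂ B₂,
          ((1/(Nlat n:ℝ)) * ∑ ξ ∈ Lambda n, Real.cos (2*π*ξ.1*x.1) * Real.cos (2*π*ξ.2*x.2))^ℓ)) := by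
        have hint12 : IntegrableOn (fun x : ℝ × ℝ =>
            ((1/(Nlat n:ℝ)) * ∑ ξ ∈ Lambda n,
              Real.cos (2*π*ξ.1*x.1) * Real.cos (2*π*ξ.2*(0:ℝ)))^ℓ
            + ((1/(Nlat n:ℝ)) * ∑ ξ ∈ Lambda n,
              Real.cos (2*π*ξ.1*(0:ℝ)) * Real.cos (2*π*ξ.2*x.2))^ℓ)
            (Set.Icc A₁ B₁ ×ˢ Set.Icc A₂ B₂) := hint1.add hint2
        rw [MeasureTheory.integral_const_mul,
          MeasureTheory.integral_add hint12 hint3, MeasureTheory.integral_add hint1 hint2]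
    _ ≤ 3^(ℓ-1) * ((s^2 * T₁) + (s^2 * T₂) + (s^2 * T₁)) := by
        apply mul_le_mul_of_nonneg_left _ (by positivity)
        have e1 : (∫ x in Set.Icc A₁ B₁ ×ˢ Set.Icc A₂ B₂,
            ((1/(Nlat n:ℝ)) * ∑ ξ ∈ Lambda n,
              Real.cos (2*π*ξ.1*x.1) * Real.cos (2*π*ξ.2*(0:ℝ)))^ℓ) ≤ s^2 * T₁ := by
          refine le_trans hcore1 ?_
          rw [hT₁, ← hU1]
        have e2 : (∫ x in Set.Icc A₁ B₁ ×ˢ Set.Icc A₂ B₂,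
            ((1/(Nlat n:ℝ)) * ∑ ξ ∈ Lambda n,
              Real.cos (2*π*ξ.1*(0:ℝ)) * Real.cos (2*π*ξ.2*x.2))^ℓ) ≤ s^2 * T₂ := by
          refine le_trans hcore2 ?_
          rw [hT₂, ← hU2]
        have e3 : (∫ x in Set.Icc A₁ B₁ ×ˢ Set.Icc A₂ B₂,
            ((1/(Nlat n:ℝ)) * ∑ ξ ∈ Lambda n,
              Real.cos (2*π*ξ.1*x.1) * Real.cos (2*π*ξ.2*x.2))^ℓ) ≤ s^2 * T₁ := by
          refine le_trans hcore3 ?_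
          rw [hT₁, ← hU1]
        exact add_le_add (add_le_add e1 e2) e3
    _ ≤ 3^(ℓ-1) * ((s^2 * max T₁ T₂) + (s^2 * max T₁ T₂) + (s^2 * max T₁ T₂)) := by
        apply mul_le_mul_of_nonneg_left _ (by positivity)
        have m1 : s^2 * T₁ ≤ s^2 * max T₁ T₂ :=
          mul_le_mul_of_nonneg_left (le_max_left _ _) (sq_nonneg s)
        have m2 : s^2 * T₂ ≤ s^2 * max T₁ T₂ :=
          mul_le_mul_of_nonneg_left (le_max_right _ _) (sq_nonneg s)
        exact add_le_add (add_le_add m1 m2) m1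
    _ = 3^ℓ * s^2 * max T₁ T₂ := by
        have h3 : (3:ℝ)^(ℓ-1) * 3 = 3^ℓ := by
          rw [← pow_succ, Nat.sub_add_cancel hℓ]
        calc 3^(ℓ-1) * ((s^2 * max T₁ T₂) + (s^2 * max T₁ T₂) + (s^2 * max T₁ T₂))
            = (3^(ℓ-1) * 3) * (s^2 * max T₁ T₂) := by ring
          _ = 3^ℓ * s^2 * max T₁ T₂ := by rw [h3]; ring
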